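/- The greedy LZ factorization of a string is optimal in the number of factors: among all unidirectional parsings of T into factors, each of which either has length 1 or occurs starting at an earlier position, the greedy parsing (always taking the longest possible factor) produces the minimum number of factors. -/

import Mathlib

/-- A factor of length `ℓ` starting at (0-based) position `p` of `T` is
admissible if it is nonempty, fits into `T`, and either has length 1 or
occurs starting at some earlier position `j < p`. -/
def LZAdmissible {α : Type*} (T : List α) (p ℓ : ℕ) : Prop :=
  0 < ℓ ∧ p + ℓ ≤ T.length ∧
    (ℓ = 1 ∨ ∃ j < p, ∀ t < ℓ, T[j + t]? = T[p + t]?)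

/-- A unidirectional parsing of `T`, given by the list `L` of factor lengths:
the lengths sum to `|T|` and each factor is admissible at its starting
position (the sum of the preceding lengths). -/
def LZParsing {α : Type*} (T : List α) (L : List ℕ) : Prop :=
  L.sum = T.length ∧
  ∀ i < L.length, LZAdmissible T ((L.take i).sum) (L.getD i 0)

/-- A greedy parsing: a parsing in which every factor is a longest
admissible factor at its starting position. -/
def LZGreedy {α : Type*} (T : List α) (G : List ℕ) : Prop :=
  LZParsing T G ∧
  ∀ i < G.length, ∀ ℓ, LZAdmissible T ((G.take i).sum) ℓ → ℓ ≤ G.getD i 0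

/-- A suffix of an admissible factor is admissible. -/
lemma LZAdmissible.suffix {α : Type*} {T : List α} {p ℓ q : ℕ}
    (h : LZAdmissible T p ℓ) (h1 : p ≤ q) (h2 : q < p + ℓ) :
    LZAdmissible T q (p + ℓ - q) := by
  obtain ⟨hpos, hlen, hocc⟩ := h
  refine ⟨by omega, by omega, ?_⟩
  rcases hocc with h1' | ⟨j, hj, hmatch⟩
  · left; omega
  · right
    refine ⟨j + (q - p), by omega, fun t ht => ?_⟩
    have := hmatch ((q - p) + t) (by omega)
    have e1 : j + (q - p) + t = j + ((q - p) + t) := by omega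
    have e2 : q + t = p + ((q - p) + t) := by omega
    rw [e1, e2]; exact this

lemma take_sum_succ {L : List ℕ} {n : ℕ} (h : n < L.length) :
    (L.take (n + 1)).sum = (L.take n).sum + L.getD n 0 := by
  rw [List.sum_take_succ L n h, List.getD_eq_getElem L 0 h]

/-- The greedy LZ parsing is optimal in the number of factors:
it has at most as many factors as any unidirectional parsing. -/
theorem greedy_lz_optimal_factor_count
    {α : Type*} (T : List α) (G P : List ℕ)
    (hG : LZGreedy T G) (hP : LZParsing T P) :
    G.length ≤ P.length := by
  by_contra hcon
  push_neg at hcon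
  -- greedy stays ahead
  have key : ∀ i ≤ P.length, (P.take i).sum ≤ (G.take i).sum := by
    intro i
    induction i with
    | zero => simp
    | succ n ih =>
      intro hn
      have hnP : n < P.length := hn
      have hnG : n < G.length := by omega
      have hpg : (P.take n).sum ≤ (G.take n).sum := ih (le_of_lt hnP)
      have hadm := hP.2 n hnP
      have hpos : 0 < P.getD n 0 := hadm.1
      rw [take_sum_succ hnP, take_sum_succ hnG]
      have hGpos : 0 < G.getD n 0 := (hG.1.2 n hnG).1
      by_cases hc : (P.take n).sum + P.getD n 0 ≤ (G.take n).sum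
      · omega
      · have hsuf := hadm.suffix hpg (by omega)
        have := hG.2 n hnG _ hsuf
        omega
  have hfin := key P.length le_rfl
  rw [List.take_length] at hfin
  have hG1 : (G.take (P.length + 1)).sum = (G.take P.length).sum + G.getD P.length 0 :=
    take_sum_succ hcon
  have hGpos : 0 < G.getD P.length 0 := (hG.1.2 P.length hcon).1
  have hle : (G.take (P.length + 1)).sum ≤ G.sum := by
    conv_rhs => rw [← List.take_append_drop (P.length + 1) G]
    rw [List.sum_append]; omega
  have e1 := hP.1
  have e2 := hG.1.1
  omega
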